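/- Let β ≥ 2 be an integer and let M, L ∈ ℤ with |M| ≤ 2S and |L| ≤ S for some real S ≥ 0. Let M̂, L̂ ∈ ℝ satisfy |M̂ − M| ≤ δ and |L̂ − L| ≤ η. If β ≥ 4(S + η) + 1 and δ + (S + η)/β < 1/2 and δ ≤ 1/4, then round(M̂ + L̂/β) = M and round(M̂/β + L̂/β²) = 0; consequently round(M̂ + L̂/β) − β·round(M̂/β + L̂/β²) = M. -/

import Mathlib

lemma round_eq_zero_of_abs_lt {x : ℝ} (h : |x| < 1 / 2) : round x = 0 := by
  rw [round_eq_zero_iff]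
  rw [abs_lt] at h
  exact ⟨h.1.le, h.2⟩

lemma round_eq_of_abs_sub_lt {x : ℝ} {n : ℤ} (h : |x - n| < 1 / 2) : round x = n := by
  have h2 : round ((x - n) + n) = round (x - n) + n := round_add_intCast _ _
  simpa [round_eq_zero_of_abs_lt h] using h2

/-- Floating-point guard for the U-free two-round extractor: with band bounds
`|M| ≤ 2S`, `|L| ≤ S`, approximation errors `δ` and `η`, base guard
`β ≥ 4(S+η)+1` and `δ + (S+η)/β < 1/2` with `δ ≤ 1/4`, the two roundings return
`M` and `0`, hence the extractor recovers `M` exactly. -/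
theorem fp_guard (β M L : ℤ) (hβ : 2 ≤ β) (S : ℝ) (hS : 0 ≤ S)
    (hM : |(M : ℝ)| ≤ 2 * S) (hL : |(L : ℝ)| ≤ S)
    (Mhat Lhat : ℝ) (δ η : ℝ)
    (hMhat : |Mhat - (M : ℝ)| ≤ δ) (hLhat : |Lhat - (L : ℝ)| ≤ η)
    (hguard1 : 4 * (S + η) + 1 ≤ (β : ℝ))
    (hguard2 : δ + (S + η) / (β : ℝ) < 1 / 2)
    (hδ : δ ≤ 1 / 4) :
    round (Mhat + Lhat / β) = M ∧
    round (Mhat / β + Lhat / (β : ℝ) ^ 2) = 0 ∧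
    round (Mhat + Lhat / β) - β * round (Mhat / β + Lhat / (β : ℝ) ^ 2) = M := by
  have hβR : (2 : ℝ) ≤ (β : ℝ) := by exact_mod_cast hβ
  have hβ0 : (0 : ℝ) < (β : ℝ) := by linarith
  have hη : 0 ≤ η := le_trans (abs_nonneg _) hLhat
  have hδ0 : 0 ≤ δ := le_trans (abs_nonneg _) hMhat
  have hLhat' : |Lhat| ≤ S + η := by
    have h := abs_sub_abs_le_abs_sub Lhat (L : ℝ)
    linarith
  have hMhat' : |Mhat| ≤ 2 * S + δ := by
    have h := abs_sub_abs_le_abs_sub Mhat (M : ℝ)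
    linarith
  have h1 : round (Mhat + Lhat / β) = M := by
    apply round_eq_of_abs_sub_lt
    have habs : |Mhat + Lhat / β - M| ≤ |Mhat - M| + |Lhat| / β := by
      calc |Mhat + Lhat / β - M| = |(Mhat - M) + Lhat / β| := by ring_nf
        _ ≤ |Mhat - M| + |Lhat / β| := abs_add_le _ _
        _ = |Mhat - M| + |Lhat| / β := by rw [abs_div, abs_of_pos hβ0]
    have h2 : |Lhat| / β ≤ (S + η) / β := by gcongr
    linarith
  have h2 : round (Mhat / β + Lhat / (β : ℝ) ^ 2) = 0 := by
    apply round_eq_zero_of_abs_lt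
    have hb2 : (0:ℝ) < (β:ℝ)^2 := by positivity
    have key : |Mhat / β + Lhat / (β : ℝ) ^ 2| ≤ (2*S + δ)/β + (S + η)/(β:ℝ)^2 := by
      calc |Mhat / β + Lhat / (β : ℝ) ^ 2| ≤ |Mhat|/β + |Lhat|/(β:ℝ)^2 := by
            refine (abs_add_le _ _).trans ?_
            rw [abs_div, abs_div, abs_of_pos hβ0, abs_of_pos hb2]
        _ ≤ (2*S + δ)/β + (S + η)/(β:ℝ)^2 := by gcongr
    have hlt : (2*S + δ)/β + (S + η)/(β:ℝ)^2 < 1/2 := by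
      rw [div_add_div _ _ (ne_of_gt hβ0) (ne_of_gt hb2), div_lt_iff₀ (by positivity)]
      nlinarith [sq_nonneg ((β:ℝ) - 1), hS, hη, hδ0]
    linarith
  refine ⟨h1, h2, ?_⟩
  rw [h1, h2]; ring
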